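/- Generalized Cauchy–Binet for fixed-size minors: let X be an a×b matrix and Y a b×c matrix over a commutative ring R. For any finsets I ⊆ Fin a and K ⊆ Fin c with |I| = |K| = r, det((X·Y)_{I,K}) = ∑_{J ⊆ Fin b, |J| = r} det(X_{I,J}) · det(Y_{J,K}), where the sum is over all r-element subsets J of Fin b. -/

import Mathlib

open Matrix Finset Equiv BigOperators

private theorem orderEmbOfFin_congr {α : Type*} [LinearOrder α] {r : ℕ}
    {J₁ J₂ : Finset α} (h : J₁ = J₂) (h₁ : J₁.card = r) (h₂ : J₂.card = r) (i : Fin r) :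
    J₁.orderEmbOfFin h₁ i = J₂.orderEmbOfFin h₂ i := by subst h; rfl

private theorem image_orderEmbOfFin_comp {α : Type*} [LinearOrder α] {r : ℕ}
    (J : Finset α) (hJ : J.card = r) (σ : Equiv.Perm (Fin r)) :
    Finset.image (J.orderEmbOfFin hJ ∘ σ) Finset.univ = J := by
  apply Finset.coe_injective
  rw [Finset.coe_image, Finset.coe_univ, Set.image_univ, Set.range_comp,
    Set.range_eq_univ.2 σ.surjective, Set.image_univ]
  exact J.range_orderEmbOfFin hJ

private theorem cauchyBinet_aux {R : Type*} [CommRing R] {b r : ℕ}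
    (A : Matrix (Fin r) (Fin b) R) (B : Matrix (Fin b) (Fin r) R) :
    (A * B).det =
      ∑ J : {J : Finset (Fin b) // J.card = r},
        (A.submatrix id (J.1.orderEmbOfFin J.2)).det *
          (B.submatrix (J.1.orderEmbOfFin J.2) id).det := by
  classical
  have step1 : (A * B).det =
      ∑ p : Fin r → Fin b, (A.submatrix id p).det * ∏ i, B (p i) i := by
    calc (A * B).det
        = ∑ σ : Perm (Fin r), (Perm.sign σ : R) * ∏ i, ∑ j, A (σ i) j * B j i := by
          simp [det_apply', mul_apply]
      _ = ∑ σ : Perm (Fin r), ∑ p : Fin r → Fin b,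
            (Perm.sign σ : R) * ∏ i, A (σ i) (p i) * B (p i) i := by
          simp [Finset.prod_univ_sum, Finset.mul_sum, Fintype.piFinset_univ]
      _ = ∑ p : Fin r → Fin b, ∑ σ : Perm (Fin r),
            (Perm.sign σ : R) * ∏ i, A (σ i) (p i) * B (p i) i := Finset.sum_comm
      _ = ∑ p : Fin r → Fin b, (A.submatrix id p).det * ∏ i, B (p i) i := by
          refine Finset.sum_congr rfl fun p _ => ?_
          rw [det_apply', Finset.sum_mul]
          refine Finset.sum_congr rfl fun σ _ => ?_
          rw [Finset.prod_mul_distrib, mul_assoc]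
          rfl
  rw [step1]
  rw [← Finset.sum_filter_add_sum_filter_not Finset.univ (fun p => Function.Injective p)]
  have h0 : ∑ p ∈ Finset.univ.filter (fun p => ¬ Function.Injective p),
      (A.submatrix id p).det * ∏ i, B (p i) i = 0 := by
    refine Finset.sum_eq_zero fun p hp => ?_
    replace hp := Finset.mem_filter.1 hp
    simp only [Function.Injective] at hp
    push_neg at hp
    obtain ⟨i, j, hij, hne⟩ := hp.2
    rw [Matrix.det_zero_of_column_eq hne (fun k => by simp [hij]), zero_mul]
  rw [h0, add_zero]
  -- rewrite the RHS as a sum over pairs (J, σ)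
  have rhs : ∑ J : {J : Finset (Fin b) // J.card = r},
        (A.submatrix id (J.1.orderEmbOfFin J.2)).det *
          (B.submatrix (J.1.orderEmbOfFin J.2) id).det
      = ∑ x : {J : Finset (Fin b) // J.card = r} × Perm (Fin r),
          (A.submatrix id (x.1.1.orderEmbOfFin x.1.2 ∘ x.2)).det *
            ∏ i, B (x.1.1.orderEmbOfFin x.1.2 (x.2 i)) i := by
    rw [Fintype.sum_prod_type]
    refine Finset.sum_congr rfl fun J _ => ?_
    rw [det_apply' (B.submatrix _ id), Finset.mul_sum]
    refine Finset.sum_congr rfl fun σ _ => ?_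
    have : A.submatrix id (J.1.orderEmbOfFin J.2 ∘ σ)
        = (A.submatrix id (J.1.orderEmbOfFin J.2)).submatrix id σ := by
      rw [Matrix.submatrix_submatrix]; rfl
    rw [this, Matrix.det_permute']
    simp only [Matrix.submatrix_apply, id_eq]
    ring
  rw [rhs]
  -- now a bijection between pairs (J, σ) and injective maps p
  refine (Finset.sum_bij
    (fun (x : {J : Finset (Fin b) // J.card = r} × Perm (Fin r)) _ =>
      (x.1.1.orderEmbOfFin x.1.2) ∘ x.2) ?_ ?_ ?_ ?_).symm
  · intro x _
    simp only [Finset.mem_filter, Finset.mem_univ, true_and]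
    exact (x.1.1.orderEmbOfFin x.1.2).injective.comp x.2.injective
  · intro x₁ _ x₂ _ h
    have hJ : x₁.1.1 = x₂.1.1 := by
      rw [← image_orderEmbOfFin_comp x₁.1.1 x₁.1.2 x₁.2,
        ← image_orderEmbOfFin_comp x₂.1.1 x₂.1.2 x₂.2, h]
    refine Prod.ext (Subtype.ext hJ) (Equiv.ext fun k => ?_)
    have := congrFun h k
    simp only [Function.comp_apply] at this
    rw [orderEmbOfFin_congr hJ x₁.1.2 x₂.1.2] at this
    exact (x₂.1.1.orderEmbOfFin x₂.1.2).injective this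
  · intro p hp
    simp only [Finset.mem_filter, Finset.mem_univ, true_and] at hp
    have hJcard : (Finset.image p Finset.univ).card = r := by
      rw [Finset.card_image_of_injective _ hp, Finset.card_univ, Fintype.card_fin]
    set J : Finset (Fin b) := Finset.image p Finset.univ with hJdef
    have hmem : ∀ i, p i ∈ J := fun i => Finset.mem_image_of_mem p (Finset.mem_univ i)
    set f : Fin r → Fin r := fun i => (J.orderIsoOfFin hJcard).symm ⟨p i, hmem i⟩ with hf
    have hfinj : Function.Injective f := by
      intro i j hij
      have hij' : (J.orderIsoOfFin hJcard).symm ⟨p i, hmem i⟩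
          = (J.orderIsoOfFin hJcard).symm ⟨p j, hmem j⟩ := hij
      exact hp (congrArg Subtype.val ((J.orderIsoOfFin hJcard).symm.injective hij'))
    refine ⟨(⟨J, hJcard⟩, Equiv.ofBijective f (Finite.injective_iff_bijective.1 hfinj)),
      Finset.mem_univ _, ?_⟩
    funext i
    simp only [Function.comp_apply, Equiv.ofBijective_apply]
    have h1 : (J.orderEmbOfFin hJcard) (f i) = ((J.orderIsoOfFin hJcard) (f i) : Fin b) :=
      (Finset.coe_orderIsoOfFin_apply J hJcard (f i)).symm
    rw [h1]
    show ((J.orderIsoOfFin hJcard) ((J.orderIsoOfFin hJcard).symm ⟨p i, hmem i⟩) : Fin b) = p i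
    rw [OrderIso.apply_symm_apply]
  · intro x _
    simp only [Function.comp_apply]

theorem det_submatrix_mul_eq_sum_det_mul_det {R : Type*} [CommRing R] {a b c r : ℕ}
    (X : Matrix (Fin a) (Fin b) R) (Y : Matrix (Fin b) (Fin c) R)
    (I : Finset (Fin a)) (K : Finset (Fin c)) (hI : I.card = r) (hK : K.card = r) :
    ((X * Y).submatrix (I.orderEmbOfFin hI) (K.orderEmbOfFin hK)).det =
      ∑ J : {J : Finset (Fin b) // J.card = r},
        (X.submatrix (I.orderEmbOfFin hI) (J.1.orderEmbOfFin J.2)).det *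
          (Y.submatrix (J.1.orderEmbOfFin J.2) (K.orderEmbOfFin hK)).det := by
  have h := Matrix.submatrix_mul_equiv X Y (I.orderEmbOfFin hI) (Equiv.refl (Fin b))
    (K.orderEmbOfFin hK)
  rw [← h, cauchyBinet_aux]
  simp [Matrix.submatrix_submatrix, Function.comp]
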